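/- arXiv:0911.2942 — 5 statements merged into one kernel-verified Lean document; each statement's English description precedes it below -/
import Mathlib

section
/- If I and J are uniquely valid subsets of {1,…,m}, then I ∪ J is uniquely valid. Consequently, if I and J are both uniquely valid subsets of maximum cardinality among the uniquely valid subsets of {1,…,m}, then I = J; i.e., there exists exactly one maximal uniquely valid subset of {1,…,m}. -/
open Matrix

/-- Euclidean norm of a vector in ℝ^m. -/
noncomputable def euclNorm {m : ℕ} (x : Fin m → ℝ) : ℝ := Real.sqrt (∑ i, x i ^ 2)

/-- the union of two uniquely valid subsets is uniquely valid, hence there is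
exactly one maximal uniquely valid subset of {1,…,m}. -/
theorem unique_maximal_uniquely_valid {n m : ℕ} (x y : Fin m → (Fin n → ℝ))
    (M : Matrix (Fin n) (Fin n) ℝ) (hM : Mᵀ * M = 1)
    (π : Equiv.Perm (Fin m)) (hy : ∀ i, y (π i) = M.mulVec (x i))
    (Valid : (Fin m → Fin m) → Finset (Fin m) → Prop)
    (hValid : Valid = fun α (I : Finset (Fin m)) => Set.InjOn α ↑I ∧
      ∀ i ∈ I, euclNorm (x i) = euclNorm (y (α i)) ∧
        ∀ j ∈ I, euclNorm (x i - x j) = euclNorm (y (α i) - y (α j)))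
    (UniquelyValid : Finset (Fin m) → Prop)
    (hUV : UniquelyValid = fun I => ∀ α, Valid α I → ∀ i ∈ I, α i = π i) :
    (∀ I J, UniquelyValid I → UniquelyValid J → UniquelyValid (I ∪ J)) ∧
    (∀ I J, UniquelyValid I → UniquelyValid J →
      (∀ K, UniquelyValid K → K.card ≤ I.card) →
      (∀ K, UniquelyValid K → K.card ≤ J.card) → I = J) := by
  subst hValid hUV
  have mono : ∀ α (I K : Finset (Fin m)), I ⊆ K →
      (Set.InjOn α ↑K ∧ ∀ i ∈ K, euclNorm (x i) = euclNorm (y (α i)) ∧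
        ∀ j ∈ K, euclNorm (x i - x j) = euclNorm (y (α i) - y (α j))) →
      (Set.InjOn α ↑I ∧ ∀ i ∈ I, euclNorm (x i) = euclNorm (y (α i)) ∧
        ∀ j ∈ I, euclNorm (x i - x j) = euclNorm (y (α i) - y (α j))) := by
    intro α I K hIK ⟨h1, h2⟩
    refine ⟨h1.mono (by exact_mod_cast hIK), fun i hi => ⟨(h2 i (hIK hi)).1,
      fun j hj => (h2 i (hIK hi)).2 j (hIK hj)⟩⟩
  have union : ∀ I J : Finset (Fin m),
      (∀ α, (Set.InjOn α ↑I ∧ ∀ i ∈ I, euclNorm (x i) = euclNorm (y (α i)) ∧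
        ∀ j ∈ I, euclNorm (x i - x j) = euclNorm (y (α i) - y (α j))) → ∀ i ∈ I, α i = π i) →
      (∀ α, (Set.InjOn α ↑J ∧ ∀ i ∈ J, euclNorm (x i) = euclNorm (y (α i)) ∧
        ∀ j ∈ J, euclNorm (x i - x j) = euclNorm (y (α i) - y (α j))) → ∀ i ∈ J, α i = π i) →
      ∀ α, (Set.InjOn α ↑(I ∪ J) ∧ ∀ i ∈ I ∪ J, euclNorm (x i) = euclNorm (y (α i)) ∧
        ∀ j ∈ I ∪ J, euclNorm (x i - x j) = euclNorm (y (α i) - y (α j))) →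
      ∀ i ∈ I ∪ J, α i = π i := by
    intro I J hI hJ α hα i hi
    rcases Finset.mem_union.mp hi with h | h
    · exact hI α (mono α I (I ∪ J) Finset.subset_union_left hα) i h
    · exact hJ α (mono α J (I ∪ J) Finset.subset_union_right hα) i h
  refine ⟨union, fun I J hI hJ hImax hJmax => ?_⟩
  have hU := union I J hI hJ
  have h1 : I = I ∪ J :=
    Finset.eq_of_subset_of_card_le Finset.subset_union_left (hImax _ hU)
  have h2 : J = I ∪ J :=
    Finset.eq_of_subset_of_card_le Finset.subset_union_right (hJmax _ hU)
  exact h1.trans h2.symm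
end

section
/- 𝕄(X,Y) = { M_T U_k U_kᵀ + V_{n−k} P U_{n−k}ᵀ : P ∈ 𝕆_{n−k} }; that is, an n×n orthogonal matrix M satisfies M X = Y if and only if M = M_T U_k U_kᵀ + V_{n−k} P U_{n−k}ᵀ for some (n−k)×(n−k) orthogonal matrix P. -/
open Matrix

/-- Column space of a matrix: the span of its columns. -/
def colSpace {n q : ℕ} (X : Matrix (Fin n) (Fin q) ℝ) : Submodule ℝ (Fin n → ℝ) :=
  Submodule.span ℝ (Set.range Xᵀ)

/-- Orthogonal complement (as a set) of a subspace of ℝ^n, w.r.t. the dot product. -/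
def perpSet {n : ℕ} (W : Submodule ℝ (Fin n → ℝ)) : Set (Fin n → ℝ) :=
  {z | ∀ w ∈ W, z ⬝ᵥ w = 0}

private lemma col_mul {n a b : ℕ} (A : Matrix (Fin n) (Fin a) ℝ) (B : Matrix (Fin a) (Fin b) ℝ)
    (j : Fin b) : (A * B)ᵀ j = A *ᵥ Bᵀ j := by
  funext i
  simp [Matrix.mul_apply, Matrix.mulVec, dotProduct]

private lemma col_mem {n a : ℕ} (A : Matrix (Fin n) (Fin a) ℝ) (j : Fin a) :
    Aᵀ j ∈ colSpace A :=
  Submodule.subset_span ⟨j, rfl⟩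

private lemma entry_dot {n a b : ℕ} (A : Matrix (Fin n) (Fin a) ℝ) (B : Matrix (Fin n) (Fin b) ℝ)
    (i : Fin a) (j : Fin b) : (Aᵀ * B) i j = Aᵀ i ⬝ᵥ Bᵀ j := by
  simp [Matrix.mul_apply, dotProduct]

private lemma perp_mul_eq_zero {n a b : ℕ} {W : Submodule ℝ (Fin n → ℝ)}
    {A : Matrix (Fin n) (Fin a) ℝ} {B : Matrix (Fin n) (Fin b) ℝ}
    (hA : ∀ i, Aᵀ i ∈ perpSet W) (hB : ∀ j, Bᵀ j ∈ W) : Aᵀ * B = 0 := by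
  ext i j
  rw [entry_dot, Matrix.zero_apply]
  exact hA i _ (hB j)

private lemma proj_fix {n a : ℕ} {A : Matrix (Fin n) (Fin a) ℝ} (hA : Aᵀ * A = 1)
    {v : Fin n → ℝ} (hv : v ∈ colSpace A) : A *ᵥ (Aᵀ *ᵥ v) = v := by
  obtain ⟨c, hc⟩ := (Submodule.mem_span_range_iff_exists_fun ℝ).mp hv
  have hv' : v = A *ᵥ c := by
    rw [← hc]; funext i
    simp [Matrix.mulVec, dotProduct, Finset.sum_apply, mul_comm]
  rw [hv', show Aᵀ *ᵥ (A *ᵥ c) = c from by rw [Matrix.mulVec_mulVec, hA, Matrix.one_mulVec]]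

private lemma proj_fix_mat {n a b : ℕ} {A : Matrix (Fin n) (Fin a) ℝ} (hA : Aᵀ * A = 1)
    {B : Matrix (Fin n) (Fin b) ℝ} (hB : ∀ j, Bᵀ j ∈ colSpace A) : A * (Aᵀ * B) = B := by
  have h : (A * (Aᵀ * B))ᵀ = Bᵀ := by
    funext j
    rw [col_mul, col_mul]
    exact proj_fix hA (hB j)
  simpa using congrArg Matrix.transpose h

private lemma completeness {n a b : ℕ} (hab : a + b = n)
    {A : Matrix (Fin n) (Fin a) ℝ} {B : Matrix (Fin n) (Fin b) ℝ}
    (hA : Aᵀ * A = 1) (hB : Bᵀ * B = 1) (hAB : Aᵀ * B = 0) :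
    A * Aᵀ + B * Bᵀ = 1 := by
  have hBA : Bᵀ * A = 0 := by
    have := congrArg Matrix.transpose hAB
    simpa using this
  have hW : (Matrix.fromCols A B)ᵀ * (Matrix.fromCols A B) = 1 := by
    rw [Matrix.transpose_fromCols, Matrix.fromRows_mul_fromCols, hA, hB, hAB, hBA,
      Matrix.fromBlocks_one]
  have e : (Fin a ⊕ Fin b) ≃ Fin n := finSumFinEquiv.trans (finCongr hab)
  have hW2 := (Matrix.mul_eq_one_comm_of_equiv e).mp hW
  rwa [Matrix.transpose_fromCols, Matrix.fromCols_mul_fromRows] at hW2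

private lemma mulVec_mem_colSpace {n q : ℕ} (M : Matrix (Fin n) (Fin n) ℝ)
    (X : Matrix (Fin n) (Fin q) ℝ) {v : Fin n → ℝ} (hv : v ∈ colSpace X) :
    M *ᵥ v ∈ colSpace (M * X) := by
  induction hv using Submodule.span_induction with
  | mem x hx =>
    obtain ⟨j, rfl⟩ := hx
    rw [← col_mul]
    exact col_mem _ j
  | zero => simp [Matrix.mulVec_zero]
  | add x y _ _ hx hy => rw [Matrix.mulVec_add]; exact add_mem hx hy
  | smul c x _ hx => rw [Matrix.mulVec_smul]; exact Submodule.smul_mem _ c hx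

/-- 𝕄(X,Y) = { M_T U_k U_kᵀ + V_{n−k} P U_{n−k}ᵀ : P ∈ 𝕆_{n−k} }, where Y = M_T X. -/
theorem orthogonal_solutions_characterization {n q k : ℕ}
    (X : Matrix (Fin n) (Fin q) ℝ) (MT : Matrix (Fin n) (Fin n) ℝ) (hMT : MTᵀ * MT = 1)
    (hk : Module.finrank ℝ (colSpace X) = k)
    (Uk : Matrix (Fin n) (Fin k) ℝ) (hUk : Ukᵀ * Uk = 1)
    (hUkspan : colSpace Uk = colSpace X)
    (U2 : Matrix (Fin n) (Fin (n - k)) ℝ) (hU2 : U2ᵀ * U2 = 1)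
    (hU2span : (colSpace U2 : Set (Fin n → ℝ)) = perpSet (colSpace X))
    (V2 : Matrix (Fin n) (Fin (n - k)) ℝ) (hV2 : V2ᵀ * V2 = 1)
    (hV2span : (colSpace V2 : Set (Fin n → ℝ)) = perpSet (colSpace (MT * X))) :
    ∀ M : Matrix (Fin n) (Fin n) ℝ,
      (Mᵀ * M = 1 ∧ M * X = MT * X) ↔
        ∃ P : Matrix (Fin (n - k)) (Fin (n - k)) ℝ,
          Pᵀ * P = 1 ∧ M = MT * Uk * Ukᵀ + V2 * P * U2ᵀ := by
  -- k ≤ n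
  have hkn : k ≤ n := by
    rw [← hk]
    calc Module.finrank ℝ (colSpace X) ≤ Module.finrank ℝ (Fin n → ℝ) :=
          Submodule.finrank_le _
      _ = n := by simp
  -- columns of U2 are in perpSet (colSpace X)
  have hU2perp : ∀ i, U2ᵀ i ∈ perpSet (colSpace X) := by
    intro i; rw [← hU2span]; exact col_mem U2 i
  have hV2perp : ∀ i, V2ᵀ i ∈ perpSet (colSpace (MT * X)) := by
    intro i; rw [← hV2span]; exact col_mem V2 i
  have hUkcol : ∀ j, Ukᵀ j ∈ colSpace X := by
    intro j; rw [← hUkspan]; exact col_mem Uk j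
  -- U2ᵀ * Uk = 0, and transpose
  have hU2Uk : U2ᵀ * Uk = 0 := perp_mul_eq_zero hU2perp hUkcol
  have hUkU2 : Ukᵀ * U2 = 0 := by
    have := congrArg Matrix.transpose hU2Uk; simpa using this
  -- U2ᵀ * X = 0
  have hU2X : U2ᵀ * X = 0 := perp_mul_eq_zero hU2perp (fun j => col_mem X j)
  -- Uk * Ukᵀ * X = X
  have hUkX : Uk * (Ukᵀ * X) = X := proj_fix_mat hUk (fun j => by
    rw [hUkspan]; exact col_mem X j)
  -- V2ᵀ * (MT * Uk) = 0
  have hV2MTUk : V2ᵀ * (MT * Uk) = 0 :=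
    perp_mul_eq_zero hV2perp (fun j => by
      rw [col_mul]; exact mulVec_mem_colSpace MT X (hUkcol j))
  have hMTUkV2 : (MT * Uk)ᵀ * V2 = 0 := by
    have := congrArg Matrix.transpose hV2MTUk; simpa using this
  -- completeness: Uk Ukᵀ + U2 U2ᵀ = 1
  have comp1 : Uk * Ukᵀ + U2 * U2ᵀ = 1 :=
    completeness (by omega) hUk hU2 hUkU2
  intro M
  constructor
  · rintro ⟨hM, hMX⟩
    -- M agrees with MT on colSpace X
    have hagree : ∀ v ∈ colSpace X, M *ᵥ v = MT *ᵥ v := by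
      intro v hv
      induction hv using Submodule.span_induction with
      | mem x hx =>
        obtain ⟨j, rfl⟩ := hx
        rw [← col_mul, ← col_mul, hMX]
      | zero => simp
      | add x y _ _ hx hy => rw [Matrix.mulVec_add, Matrix.mulVec_add, hx, hy]
      | smul c x _ hx => rw [Matrix.mulVec_smul, Matrix.mulVec_smul, hx]
    have hMUk : M * Uk = MT * Uk := by
      have h : (M * Uk)ᵀ = (MT * Uk)ᵀ := by
        funext j; rw [col_mul, col_mul]; exact hagree _ (hUkcol j)
      simpa using congrArg Matrix.transpose h
    -- key: M preserves dot products
    have key : ∀ u x : Fin n → ℝ, (M *ᵥ u) ⬝ᵥ (M *ᵥ x) = u ⬝ᵥ x := by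
      intro u x
      rw [Matrix.dotProduct_mulVec, ← Matrix.vecMul_transpose, Matrix.vecMul_vecMul,
        hM, Matrix.vecMul_one]
    -- columns of M * U2 are in colSpace V2
    have hMU2mem : ∀ j, (M * U2)ᵀ j ∈ colSpace V2 := by
      intro j
      have hmem : (M * U2)ᵀ j ∈ perpSet (colSpace (MT * X)) := by
        intro w hw
        induction hw using Submodule.span_induction with
        | mem x hx =>
          obtain ⟨i, rfl⟩ := hx
          have hcol : (MT * X)ᵀ i = M *ᵥ Xᵀ i := by rw [← hMX, col_mul]
          rw [hcol, col_mul, key]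
          exact hU2perp j _ (col_mem X i)
        | zero => simp
        | add x y _ _ hx hy => rw [dotProduct_add, hx, hy, add_zero]
        | smul c x _ hx => rw [dotProduct_smul, hx, smul_zero]
      rw [← hV2span] at hmem
      exact hmem
    have hMU2 : V2 * (V2ᵀ * (M * U2)) = M * U2 := proj_fix_mat hV2 hMU2mem
    refine ⟨V2ᵀ * (M * U2), ?_, ?_⟩
    · -- Pᵀ P = 1
      calc (V2ᵀ * (M * U2))ᵀ * (V2ᵀ * (M * U2))
          = (M * U2)ᵀ * (V2 * (V2ᵀ * (M * U2))) := by
            rw [Matrix.transpose_mul, Matrix.transpose_transpose, Matrix.mul_assoc]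
        _ = (M * U2)ᵀ * (M * U2) := by rw [hMU2]
        _ = U2ᵀ * ((Mᵀ * M) * U2) := by
            rw [Matrix.transpose_mul, Matrix.mul_assoc, Matrix.mul_assoc]
        _ = 1 := by rw [hM, Matrix.one_mul, hU2]
    · -- M = MT*Uk*Ukᵀ + V2*P*U2ᵀ
      calc M = M * (Uk * Ukᵀ + U2 * U2ᵀ) := by rw [comp1, Matrix.mul_one]
        _ = (M * Uk) * Ukᵀ + (M * U2) * U2ᵀ := by
            rw [Matrix.mul_add, ← Matrix.mul_assoc, ← Matrix.mul_assoc]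
        _ = MT * Uk * Ukᵀ + V2 * (V2ᵀ * (M * U2)) * U2ᵀ := by rw [hMUk, hMU2]
  · rintro ⟨P, hP, rfl⟩
    set A := MT * Uk with hAdef
    have hA : Aᵀ * A = 1 := by
      rw [hAdef, Matrix.transpose_mul, Matrix.mul_assoc, ← Matrix.mul_assoc Ukᵀ MTᵀ,
        ← Matrix.mul_assoc, Matrix.mul_assoc Ukᵀ, hMT, Matrix.mul_one, hUk]
    have hVA : ∀ {c : ℕ} (Z : Matrix (Fin k) (Fin c) ℝ), V2ᵀ * (A * Z) = 0 := by
      intro c Z; rw [← Matrix.mul_assoc, hV2MTUk, Matrix.zero_mul]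
    have hAV : ∀ {c : ℕ} (Z : Matrix (Fin (n - k)) (Fin c) ℝ), Aᵀ * (V2 * Z) = 0 := by
      intro c Z; rw [← Matrix.mul_assoc, hMTUkV2, Matrix.zero_mul]
    have hAA : ∀ {c : ℕ} (Z : Matrix (Fin k) (Fin c) ℝ), Aᵀ * (A * Z) = Z := by
      intro c Z; rw [← Matrix.mul_assoc, hA, Matrix.one_mul]
    have hVV : ∀ {c : ℕ} (Z : Matrix (Fin (n - k)) (Fin c) ℝ), V2ᵀ * (V2 * Z) = Z := by
      intro c Z; rw [← Matrix.mul_assoc, hV2, Matrix.one_mul]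
    have hPP : ∀ {c : ℕ} (Z : Matrix (Fin (n - k)) (Fin c) ℝ), Pᵀ * (P * Z) = Z := by
      intro c Z; rw [← Matrix.mul_assoc, hP, Matrix.one_mul]
    constructor
    · -- orthogonality
      have expand : (MT * Uk * Ukᵀ + V2 * P * U2ᵀ)ᵀ * (MT * Uk * Ukᵀ + V2 * P * U2ᵀ)
          = Uk * Ukᵀ + U2 * U2ᵀ := by
        rw [show MT * Uk = A from rfl]
        simp only [Matrix.transpose_add, Matrix.transpose_mul, Matrix.transpose_transpose,
          Matrix.add_mul, Matrix.mul_add, Matrix.mul_assoc]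
        rw [hAA, hAV, hVA, hVV, hPP]
        simp
      rw [expand, comp1]
    · -- M X = MT X
      rw [Matrix.add_mul, Matrix.mul_assoc (MT * Uk), Matrix.mul_assoc MT Uk, hUkX,
        Matrix.mul_assoc, Matrix.mul_assoc, hU2X, Matrix.mul_zero, Matrix.mul_zero, add_zero]
end

section
/- Let x ∈ ℝⁿ be nonzero, let M_T and M̂ be n×n orthogonal matrices, set x̂ = M̂ᵀ M_T x, and let ε ≥ 0. Then 1 − ⟨x̂, x⟩/(‖x̂‖·‖x‖) ≤ ε if and only if ‖x̂ − x‖ ≤ ‖x‖·√(2ε); i.e., an ε-cos-privacy breach occurs if and only if a √(2ε)-privacy breach occurs. -/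
open Matrix

lemma euclNorm_eq_sqrt_dot {m : ℕ} (x : Fin m → ℝ) :
    euclNorm x = Real.sqrt (x ⬝ᵥ x) := by
  simp [euclNorm, dotProduct, sq]

lemma dot_self_nonneg {m : ℕ} (x : Fin m → ℝ) : 0 ≤ x ⬝ᵥ x :=
  Finset.sum_nonneg fun i _ => mul_self_nonneg _

lemma orth_dot {m : ℕ} (M : Matrix (Fin m) (Fin m) ℝ) (hM : Mᵀ * M = 1) (v : Fin m → ℝ) :
    (M *ᵥ v) ⬝ᵥ (M *ᵥ v) = v ⬝ᵥ v := by
  rw [Matrix.dotProduct_mulVec, ← Matrix.vecMul_transpose, Matrix.vecMul_vecMul, hM,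
    Matrix.vecMul_one]

/-- an ε-cos-privacy breach occurs iff a √(2ε)-privacy breach occurs. -/
theorem cos_breach_iff {n : ℕ} (x : Fin n → ℝ) (hx : x ≠ 0)
    (MT Mhat : Matrix (Fin n) (Fin n) ℝ) (hMT : MTᵀ * MT = 1) (hMhat : Mhatᵀ * Mhat = 1)
    (ε : ℝ) (hε : 0 ≤ ε) :
    (1 - (Mhatᵀ.mulVec (MT.mulVec x)) ⬝ᵥ x /
        (euclNorm (Mhatᵀ.mulVec (MT.mulVec x)) * euclNorm x) ≤ ε) ↔
      euclNorm (Mhatᵀ.mulVec (MT.mulVec x) - x) ≤ euclNorm x * Real.sqrt (2 * ε) := by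
  set y := Mhatᵀ.mulVec (MT.mulVec x) with hy
  have hMM : Mhatᵀᵀ * Mhatᵀ = 1 := by
    rw [Matrix.transpose_transpose]; exact mul_eq_one_comm.mp hMhat
  set a := x ⬝ᵥ x with ha
  set c := y ⬝ᵥ x with hc
  have hyy : y ⬝ᵥ y = a := by
    rw [hy, orth_dot Mhatᵀ hMM, orth_dot MT hMT]
  have ha0 : 0 < a := by
    rcases (dot_self_nonneg x).lt_or_eq with h | h
    · exact h
    · exfalso; apply hx
      funext i
      have := (Finset.sum_eq_zero_iff_of_nonneg (fun i _ => mul_self_nonneg (x i))).mp h.symm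
        i (Finset.mem_univ i)
      exact mul_self_eq_zero.mp this
  have hnx : euclNorm x = Real.sqrt a := euclNorm_eq_sqrt_dot x
  have hny : euclNorm y = Real.sqrt a := by rw [euclNorm_eq_sqrt_dot, hyy]
  have hsq : Real.sqrt a * Real.sqrt a = a := Real.mul_self_sqrt ha0.le
  have hsub : (y - x) ⬝ᵥ (y - x) = 2 * a - 2 * c := by
    simp only [sub_dotProduct, dotProduct_sub, hyy, ← hc, ← ha,
      dotProduct_comm x y]
    ring
  constructor
  · intro h
    have h1 : a - c ≤ ε * a := by
      have := sub_le_iff_le_add.mp h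
      rw [hny, hnx, hsq] at this
      have h2 : 1 - ε ≤ c / a := by linarith
      have h3 := (le_div_iff₀ ha0).mp h2
      nlinarith
    rw [euclNorm_eq_sqrt_dot, hnx, ← Real.sqrt_mul ha0.le, hsub]
    apply Real.sqrt_le_sqrt
    nlinarith
  · intro h
    rw [euclNorm_eq_sqrt_dot, hnx, ← Real.sqrt_mul ha0.le, hsub] at h
    have h2 : 2 * a - 2 * c ≤ a * (2 * ε) :=
      (Real.sqrt_le_sqrt_iff
        (mul_nonneg ha0.le (by linarith) : (0:ℝ) ≤ a * (2 * ε))).mp h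
    rw [hny, hnx, hsq]
    have : a - c ≤ ε * a := by nlinarith
    have hca : 1 - ε ≤ c / a := by
      rw [le_div_iff₀ ha0]; nlinarith
    linarith
end

section
/- Assume additionally that the columns of U_k and U_{n−k} together form an orthonormal basis of ℝⁿ (i.e., U = [U_k | U_{n−k}] is orthogonal). For every (n−k)×(n−k) orthogonal matrix P, setting M̂ = M_T U_k U_kᵀ + V_{n−k} P U_{n−k}ᵀ, it holds for every x ∈ ℝⁿ that ‖M̂ᵀ M_T x − x‖ = ‖Pᵀ V_{n−k}ᵀ M_T x − U_{n−k}ᵀ x‖. -/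
open Matrix

lemma euclNorm_mulVec_isometry {m p : ℕ} (A : Matrix (Fin m) (Fin p) ℝ)
    (hA : Aᵀ * A = 1) (w : Fin p → ℝ) : euclNorm (A.mulVec w) = euclNorm w := by
  unfold euclNorm
  congr 1
  have h1 : ∑ i, (A.mulVec w) i ^ 2 = (A.mulVec w) ⬝ᵥ (A.mulVec w) := by
    simp [dotProduct, sq]
  have h2 : ∑ i, w i ^ 2 = w ⬝ᵥ w := by simp [dotProduct, sq]
  rw [h1, h2, Matrix.dotProduct_mulVec, ← Matrix.mulVec_transpose,
    Matrix.mulVec_mulVec, hA, Matrix.one_mulVec]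

/-- if the columns of U_k and U_{n−k} together form an orthonormal basis of ℝⁿ,
then for M̂ = M_T U_k U_kᵀ + V_{n−k} P U_{n−k}ᵀ (P orthogonal) and every x,
‖M̂ᵀ M_T x − x‖ = ‖Pᵀ V_{n−k}ᵀ M_T x − U_{n−k}ᵀ x‖. -/
theorem norm_estimate_reduction {n q k : ℕ}
    (X : Matrix (Fin n) (Fin q) ℝ) (MT : Matrix (Fin n) (Fin n) ℝ) (hMT : MTᵀ * MT = 1)
    (hk : Module.finrank ℝ (colSpace X) = k)
    (Uk : Matrix (Fin n) (Fin k) ℝ) (hUk : Ukᵀ * Uk = 1)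
    (hUkspan : colSpace Uk = colSpace X)
    (U2 : Matrix (Fin n) (Fin (n - k)) ℝ) (hU2 : U2ᵀ * U2 = 1)
    (hU2span : (colSpace U2 : Set (Fin n → ℝ)) = perpSet (colSpace X))
    (V2 : Matrix (Fin n) (Fin (n - k)) ℝ) (hV2 : V2ᵀ * V2 = 1)
    (hV2span : (colSpace V2 : Set (Fin n → ℝ)) = perpSet (colSpace (MT * X)))
    (hUkU2 : Ukᵀ * U2 = 0)
    (hcomplete : Uk * Ukᵀ + U2 * U2ᵀ = 1) :
    ∀ P : Matrix (Fin (n - k)) (Fin (n - k)) ℝ, Pᵀ * P = 1 →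
      ∀ x : Fin n → ℝ,
        euclNorm ((MT * Uk * Ukᵀ + V2 * P * U2ᵀ)ᵀ.mulVec (MT.mulVec x) - x) =
          euclNorm (Pᵀ.mulVec (V2ᵀ.mulVec (MT.mulVec x)) - U2ᵀ.mulVec x) := by
  intro P hP x
  have key : (MT * Uk * Ukᵀ + V2 * P * U2ᵀ)ᵀ.mulVec (MT.mulVec x) - x
      = U2.mulVec (Pᵀ.mulVec (V2ᵀ.mulVec (MT.mulVec x)) - U2ᵀ.mulVec x) := by
    have hmat : (MT * Uk * Ukᵀ + V2 * P * U2ᵀ)ᵀ * MT - 1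
        = U2 * (Pᵀ * V2ᵀ * MT) - U2 * U2ᵀ := by
      have h3 : (MT * Uk * Ukᵀ + V2 * P * U2ᵀ)ᵀ * MT
          = Uk * Ukᵀ + U2 * (Pᵀ * V2ᵀ * MT) := by
        calc (MT * Uk * Ukᵀ + V2 * P * U2ᵀ)ᵀ * MT
            = Uk * (Ukᵀ * (MTᵀ * MT)) + U2 * (Pᵀ * V2ᵀ * MT) := by
              simp [Matrix.transpose_mul, Matrix.add_mul, Matrix.mul_assoc]
          _ = Uk * Ukᵀ + U2 * (Pᵀ * V2ᵀ * MT) := by rw [hMT]; simp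
      rw [h3, ← hcomplete]
      abel
    have := congrArg (fun M => M.mulVec x) hmat
    simpa [Matrix.sub_mulVec, Matrix.mulVec_mulVec, Matrix.mulVec_sub,
      sub_eq_sub_iff_sub_eq_sub, Matrix.mul_assoc] using this
  rw [key, euclNorm_mulVec_isometry U2 hU2]
end

section
/- If the n×q real matrix X has rank n−1 (equivalently k = dim Col(X) = n−1), then 𝕄(X, M_T X) contains exactly two elements, one of which is M_T. -/
open Matrix

/-- Two matrices agreeing on all `mulVec` are equal. -/
lemma mulVec_ext' {n m : ℕ} {A B : Matrix (Fin n) (Fin m) ℝ}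
    (h : ∀ w, A *ᵥ w = B *ᵥ w) : A = B := by
  ext i j
  have h2 := congrFun (h (Pi.single j 1)) i
  simpa [Matrix.mulVec_single] using h2

/-- Orthogonal matrices preserve dot products. -/
lemma orth_dot_s18 {n : ℕ} {N : Matrix (Fin n) (Fin n) ℝ} (hN : Nᵀ * N = 1)
    (a b : Fin n → ℝ) : (N *ᵥ a) ⬝ᵥ (N *ᵥ b) = a ⬝ᵥ b := by
  rw [Matrix.dotProduct_mulVec, show N *ᵥ a = a ᵥ* Nᵀ from (Matrix.vecMul_transpose N a).symm,
    Matrix.vecMul_vecMul, hN, Matrix.vecMul_one]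

/-- if rank X = n − 1 then 𝕄(X, M_T X) has exactly two elements,
one of which is M_T. -/
theorem rank_sub_one_two_solutions {n q : ℕ} (hn : 1 ≤ n)
    (X : Matrix (Fin n) (Fin q) ℝ)
    (MT : Matrix (Fin n) (Fin n) ℝ) (hMT : MTᵀ * MT = 1)
    (hrank : X.rank = n - 1) :
    ∃ M' : Matrix (Fin n) (Fin n) ℝ, M' ≠ MT ∧
      {M : Matrix (Fin n) (Fin n) ℝ | Mᵀ * M = 1 ∧ M * X = MT * X} = {MT, M'} := by
  classical
  -- the kernel of Xᵀ (as a linear map) is one-dimensional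
  have hkerdim : Module.finrank ℝ (LinearMap.ker (Xᵀ).mulVecLin) = 1 := by
    have h1 := LinearMap.finrank_range_add_finrank_ker (Xᵀ).mulVecLin
    have h2 : Module.finrank ℝ (LinearMap.range (Xᵀ).mulVecLin) = n - 1 := by
      have : (Xᵀ).rank = n - 1 := by rw [Matrix.rank_transpose]; exact hrank
      simpa [Matrix.rank] using this
    have h3 : Module.finrank ℝ (Fin n → ℝ) = n := by simp
    rw [h2, h3] at h1
    omega
  obtain ⟨v, hv0, hv⟩ := (finrank_eq_one_iff' ).mp hkerdim
  have hvker : Xᵀ *ᵥ (v : Fin n → ℝ) = 0 := by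
    have h := v.2
    rw [LinearMap.mem_ker] at h
    rwa [Matrix.mulVecLin_apply] at h
  have hv0' : (v : Fin n → ℝ) ≠ 0 := by
    intro h
    exact hv0 (Subtype.ext h)
  -- positivity of v ⬝ v
  have hvv_nonneg : 0 ≤ (v : Fin n → ℝ) ⬝ᵥ (v : Fin n → ℝ) :=
    Finset.sum_nonneg fun i _ => mul_self_nonneg _
  have hvv_pos : 0 < (v : Fin n → ℝ) ⬝ᵥ (v : Fin n → ℝ) := by
    rcases hvv_nonneg.lt_or_eq with h | h
    · exact h
    · exact absurd (dotProduct_self_eq_zero.mp h.symm) hv0'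
  set s : ℝ := Real.sqrt ((v : Fin n → ℝ) ⬝ᵥ (v : Fin n → ℝ)) with hs_def
  have hs_pos : 0 < s := Real.sqrt_pos.mpr hvv_pos
  have hs_sq : s * s = (v : Fin n → ℝ) ⬝ᵥ (v : Fin n → ℝ) :=
    Real.mul_self_sqrt hvv_nonneg
  set u : Fin n → ℝ := s⁻¹ • (v : Fin n → ℝ) with hu_def
  have huu : u ⬝ᵥ u = 1 := by
    rw [hu_def, smul_dotProduct, dotProduct_smul, smul_eq_mul, smul_eq_mul,
      ← hs_sq]
    field_simp
  have hku : Xᵀ *ᵥ u = 0 := by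
    rw [hu_def, Matrix.mulVec_smul, hvker, smul_zero]
  have hu0 : u ≠ 0 := by
    intro h
    rw [h] at huu
    simp at huu
  -- every kernel element is a multiple of u
  have hspan : ∀ w : Fin n → ℝ, Xᵀ *ᵥ w = 0 → ∃ c : ℝ, c • u = w := by
    intro w hw
    have hwker : w ∈ LinearMap.ker (Xᵀ).mulVecLin := by
      rw [LinearMap.mem_ker, Matrix.mulVecLin_apply]; exact hw
    obtain ⟨c, hc⟩ := hv ⟨w, hwker⟩
    refine ⟨c * s, ?_⟩
    have hc' : c • (v : Fin n → ℝ) = w := by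
      have := congrArg (Subtype.val) hc
      simpa using this
    rw [hu_def, smul_smul, mul_assoc, mul_inv_cancel₀ hs_pos.ne', mul_one, hc']
  -- the hyperplane orthogonal to u
  set S : Submodule ℝ (Fin n → ℝ) :=
    LinearMap.ker ((Matrix.of fun (_ : Fin 1) => u).mulVecLin) with hS_def
  have hmemS : ∀ w, w ∈ S ↔ u ⬝ᵥ w = 0 := by
    intro w
    constructor
    · intro h
      have := congrFun ((LinearMap.mem_ker).mp h) 0
      simpa [Matrix.mulVecLin, Matrix.mulVec] using this
    · intro h
      rw [hS_def, LinearMap.mem_ker]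
      funext i
      simpa [Matrix.mulVecLin, Matrix.mulVec] using h
  -- colSpace X = S
  have hcol_le : colSpace X ≤ S := by
    rw [colSpace, Submodule.span_le]
    rintro _ ⟨j, rfl⟩
    rw [SetLike.mem_coe, hmemS]
    rw [dotProduct_comm]
    have := congrFun hku j
    exact this
  have hcolrank : Module.finrank ℝ (colSpace X) = n - 1 := by
    have : colSpace X = LinearMap.range X.mulVecLin := (Matrix.range_mulVecLin X).symm
    rw [this]
    simpa [Matrix.rank] using hrank
  have hS_lt : S < ⊤ := by
    rw [lt_top_iff_ne_top]
    intro h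
    have : u ∈ S := h ▸ Submodule.mem_top
    rw [hmemS] at this
    rw [huu] at this
    norm_num at this
  have hS_rank : Module.finrank ℝ S < n := by
    have := Submodule.finrank_lt (K := ℝ) (V := Fin n → ℝ) hS_lt.ne
    simpa using this
  have hCS : colSpace X = S := by
    apply Submodule.eq_of_le_of_finrank_le hcol_le
    rw [hcolrank]; omega
  -- decomposition
  have hdec : ∀ w : Fin n → ℝ, w - (u ⬝ᵥ w) • u ∈ colSpace X := by
    intro w
    rw [hCS, hmemS, dotProduct_sub, dotProduct_smul, huu, smul_eq_mul, mul_one,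
      sub_self]
  -- the reflection R
  set P : Matrix (Fin n) (Fin n) ℝ := Matrix.vecMulVec u u with hP_def
  have hP_mulVec : ∀ w, P *ᵥ w = (u ⬝ᵥ w) • u := by
    intro w
    funext i
    simp only [hP_def, Matrix.mulVec, dotProduct, Matrix.vecMulVec_apply,
      Pi.smul_apply, smul_eq_mul]
    rw [Finset.sum_congr rfl fun j _ => mul_assoc (u i) (u j) (w j), ← Finset.mul_sum]
    ring_nf
  set R : Matrix (Fin n) (Fin n) ℝ := 1 - (2:ℝ) • P with hR_def
  have hR_mulVec : ∀ w, R *ᵥ w = w - (2 * (u ⬝ᵥ w)) • u := by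
    intro w
    rw [hR_def, Matrix.sub_mulVec, Matrix.one_mulVec, Matrix.smul_mulVec, hP_mulVec,
      smul_smul]
  have hPT : Pᵀ = P := by
    ext i j
    simp [hP_def, Matrix.vecMulVec_apply, mul_comm]
  have hRT : Rᵀ = R := by
    rw [hR_def]
    simp [Matrix.transpose_smul, hPT]
  have hRR : Rᵀ * R = 1 := by
    rw [hRT]
    apply mulVec_ext'
    intro w
    rw [← Matrix.mulVec_mulVec, hR_mulVec, hR_mulVec, Matrix.one_mulVec]
    rw [dotProduct_sub, dotProduct_smul, huu, smul_eq_mul, mul_one]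
    funext i
    simp only [Pi.sub_apply, Pi.smul_apply, smul_eq_mul]
    ring
  have hRX : R * X = X := by
    have hPX : P * X = 0 := by
      ext i j
      simp only [hP_def, Matrix.mul_apply, Matrix.vecMulVec_apply, Matrix.zero_apply]
      rw [Finset.sum_congr rfl fun k _ => mul_assoc (u i) (u k) (X k j), ← Finset.mul_sum]
      have : (Xᵀ *ᵥ u) j = 0 := by rw [hku]; rfl
      have h2 : ∑ k, u k * X k j = 0 := by
        rw [← this]
        simp [Matrix.mulVec, dotProduct, Matrix.transpose_apply, mul_comm]
      rw [h2, mul_zero]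
    rw [hR_def, Matrix.sub_mul, Matrix.one_mul, Matrix.smul_mul, hPX, smul_zero, sub_zero]
  have hMT' : MT * MTᵀ = 1 := mul_eq_one_comm.mp hMT
  refine ⟨MT * R, ?_, ?_⟩
  · -- MT * R ≠ MT
    intro h
    have hR1 : R = 1 := by
      have h2 := congrArg (fun A => MTᵀ * A) h
      simpa [← Matrix.mul_assoc, hMT] using h2
    have h3 : R *ᵥ u = u := by rw [hR1, Matrix.one_mulVec]
    rw [hR_mulVec, huu, mul_one] at h3
    have h5 : u = 0 := by
      funext i
      have h6 := congrFun h3 i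
      simp only [Pi.sub_apply, Pi.smul_apply, smul_eq_mul, Pi.zero_apply] at h6 ⊢
      linarith
    exact hu0 h5
  · ext M
    simp only [Set.mem_setOf_eq, Set.mem_insert_iff, Set.mem_singleton_iff]
    constructor
    · rintro ⟨hM1, hM2⟩
      set N : Matrix (Fin n) (Fin n) ℝ := MTᵀ * M with hN_def
      have hN1 : Nᵀ * N = 1 := by
        rw [hN_def, Matrix.transpose_mul, Matrix.transpose_transpose, Matrix.mul_assoc,
          ← Matrix.mul_assoc MT, hMT', Matrix.one_mul, hM1]
      have hNX : N * X = X := by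
        rw [hN_def, Matrix.mul_assoc, hM2, ← Matrix.mul_assoc, hMT, Matrix.one_mul]
      have hMN : M = MT * N := by
        rw [hN_def, ← Matrix.mul_assoc, hMT', Matrix.one_mul]
      -- N fixes the column space pointwise
      have hfixcol : ∀ j, N *ᵥ Xᵀ j = Xᵀ j := by
        intro j
        funext i
        have h2 : (N *ᵥ Xᵀ j) i = (N * X) i j := by
          simp [Matrix.mulVec, Matrix.mul_apply, dotProduct, Matrix.transpose_apply]
        rw [h2, hNX]
        rfl
      have hfix : ∀ w ∈ colSpace X, N *ᵥ w = w := by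
        intro w hw
        refine Submodule.span_induction ?_ ?_ ?_ ?_ hw
        · rintro _ ⟨j, rfl⟩
          exact hfixcol j
        · exact Matrix.mulVec_zero N
        · intro x y _ _ hx hy
          rw [Matrix.mulVec_add, hx, hy]
        · intro a x _ hx
          rw [Matrix.mulVec_smul, hx]
      -- N *ᵥ u is in the kernel of Xᵀ
      have hNuker : Xᵀ *ᵥ (N *ᵥ u) = 0 := by
        funext j
        have hcj : Xᵀ j ∈ colSpace X := Submodule.subset_span (Set.mem_range_self j)
        have h2 : (Xᵀ *ᵥ (N *ᵥ u)) j = Xᵀ j ⬝ᵥ (N *ᵥ u) := rfl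
        rw [h2, ← hfix _ hcj, orth_dot_s18 hN1, ← hku]
        rfl
      obtain ⟨c, hc⟩ := hspan _ hNuker
      have hcc : c * c = 1 := by
        have h2 : (N *ᵥ u) ⬝ᵥ (N *ᵥ u) = 1 := by rw [orth_dot_s18 hN1, huu]
        rw [← hc, smul_dotProduct, dotProduct_smul, huu] at h2
        simpa using h2
      rcases mul_self_eq_one_iff.mp hcc with hc1 | hc1
      · -- c = 1 : N = 1, M = MT
        left
        have hN : N = 1 := by
          apply mulVec_ext'
          intro w
          have h1 : N *ᵥ (w - (u ⬝ᵥ w) • u) = w - (u ⬝ᵥ w) • u := hfix _ (hdec w)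
          have h2 : N *ᵥ w = N *ᵥ (w - (u ⬝ᵥ w) • u) + (u ⬝ᵥ w) • (N *ᵥ u) := by
            rw [← Matrix.mulVec_smul, ← Matrix.mulVec_add, sub_add_cancel]
          rw [h2, h1, ← hc, hc1, one_smul, sub_add_cancel, Matrix.one_mulVec]
        rw [hMN, hN, Matrix.mul_one]
      · -- c = -1 : N = R, M = MT * R
        right
        have hN : N = R := by
          apply mulVec_ext'
          intro w
          have h1 : N *ᵥ (w - (u ⬝ᵥ w) • u) = w - (u ⬝ᵥ w) • u := hfix _ (hdec w)
          have h2 : N *ᵥ w = N *ᵥ (w - (u ⬝ᵥ w) • u) + (u ⬝ᵥ w) • (N *ᵥ u) := by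
            rw [← Matrix.mulVec_smul, ← Matrix.mulVec_add, sub_add_cancel]
          rw [h2, h1, ← hc, hc1, hR_mulVec]
          funext i
          simp only [Pi.add_apply, Pi.sub_apply, Pi.smul_apply, smul_eq_mul]
          ring
        rw [hMN, hN]
    · rintro (rfl | rfl)
      · exact ⟨hMT, rfl⟩
      · constructor
        · rw [Matrix.transpose_mul, Matrix.mul_assoc, ← Matrix.mul_assoc MTᵀ, hMT,
            Matrix.one_mul, hRR]
        · rw [Matrix.mul_assoc, hRX]
end
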